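/- Let i ∈ N be a buyer, ξ ∈ ℝ_{≥0}^{E_i} with ξ(E_i) ≤ d_i, and u ∈ ℝ_{≥0}^{N−i}. Then u ∈ P^i_{w,d}(ξ) if and only if for every Y ⊆ N−i it holds that u(Y) ≤ min_{Z ⊆ Y, F ⊆ E_i} ( f_w(E_Z ∪ F) + d(Y \ Z) − ξ(F) ). -/

import Mathlib

open Finset

noncomputable section

namespace TwoSidedMarket

variable {B S : Type*} [Fintype B] [Fintype S] [DecidableEq B] [DecidableEq S]

/-- A function `f` on subsets of a ground set `G` is monotone submodular:
`f ∅ = 0`, monotone on subsets of `G`, and submodular on subsets of `G`. -/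
def IsMonoSubmodular {α : Type*} [DecidableEq α] (G : Finset α) (f : Finset α → ℝ) : Prop :=
  f ∅ = 0 ∧ (∀ A B : Finset α, A ⊆ B → B ⊆ G → f A ≤ f B) ∧
    ∀ A B : Finset α, A ⊆ G → B ⊆ G → f (A ∩ B) + f (A ∪ B) ≤ f A + f B

/-- Monotone submodular, without the requirement of vanishing at `∅`. -/
def IsMonoSubmodularWeak {α : Type*} [DecidableEq α] (G : Finset α) (f : Finset α → ℝ) : Prop :=
  (∀ A B : Finset α, A ⊆ B → B ⊆ G → f A ≤ f B) ∧
    ∀ A B : Finset α, A ⊆ G → B ⊆ G → f (A ∩ B) + f (A ∪ B) ≤ f A + f B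

/-- `E_i`: the edges of `E` incident to buyer `i`. -/
def Ei (E : Finset (B × S)) (i : B) : Finset (B × S) := E.filter fun e => e.1 = i

/-- `E_j`: the edges of `E` incident to seller `j`. -/
def Ej (E : Finset (B × S)) (j : S) : Finset (B × S) := E.filter fun e => e.2 = j

/-- `E_X`: the edges of `E` incident to some buyer in `X`. -/
def EX (E : Finset (B × S)) (X : Finset B) : Finset (B × S) := E.filter fun e => e.1 ∈ X

/-- `N_F`: the buyers incident to some edge of `F`. -/
def NF (F : Finset (B × S)) : Finset B := F.image Prod.fst

/-- `x(F) = Σ_{e ∈ F} x e`. -/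
def vsum (x : B × S → ℝ) (F : Finset (B × S)) : ℝ := ∑ e ∈ F, x e

/-- Membership `w ∈ P = ⊕_j P_j`: `w` is nonnegative, supported on `E`, and
`w|_{E_j} ∈ P_j` for every seller `j`. -/
def memP (E : Finset (B × S)) (fj : S → Finset (B × S) → ℝ) (w : B × S → ℝ) : Prop :=
  (∀ e, 0 ≤ w e) ∧ (∀ e ∉ E, w e = 0) ∧ ∀ j : S, ∀ F ⊆ Ej E j, vsum w F ≤ fj j F

/-- `f(F) := Σ_{j ∈ M} f_j (E_j ∩ F)`. -/
def fTot (E : Finset (B × S)) (fj : S → Finset (B × S) → ℝ) (F : Finset (B × S)) : ℝ :=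
  ∑ j : S, fj j (Ej E j ∩ F)

/-- `f_w(F) := min_{F ⊆ F' ⊆ E} (f(F') - w(F'))`. -/
def fw (E : Finset (B × S)) (fj : S → Finset (B × S) → ℝ)
    (w : B × S → ℝ) (F : Finset (B × S)) : ℝ :=
  sInf {r : ℝ | ∃ F' : Finset (B × S), F ⊆ F' ∧ F' ⊆ E ∧ r = fTot E fj F' - vsum w F'}

/-- Membership in the remnant supply polytope `P_{w,d}`. -/
def memPwd (E : Finset (B × S)) (fj : S → Finset (B × S) → ℝ)
    (w : B × S → ℝ) (d : B → ℝ) (x : B × S → ℝ) : Prop :=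
  (∀ e, 0 ≤ x e) ∧ (∀ e ∉ E, x e = 0) ∧ memP E fj (w + x) ∧
    ∀ i : B, vsum x (Ei E i) ≤ d i

/-- `f_{w,d}(F) := max_{x ∈ P_{w,d}} x(F)`. -/
def fwd (E : Finset (B × S)) (fj : S → Finset (B × S) → ℝ)
    (w : B × S → ℝ) (d : B → ℝ) (F : Finset (B × S)) : ℝ :=
  sSup {r : ℝ | ∃ x : B × S → ℝ, memPwd E fj w d x ∧ r = vsum x F}

/-- `P^i_{w,d}(ξ)`: the remnant supply polytope of the buyers other than `i`,
given that buyer `i` receives `ξ`.  (Vectors indexed by `N - i` are encoded as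
functions on all of `B` vanishing at `i`.) -/
def PiWd (E : Finset (B × S)) (fj : S → Finset (B × S) → ℝ)
    (w : B × S → ℝ) (d : B → ℝ) (i : B) (ξ : B × S → ℝ) : Set (B → ℝ) :=
  {u | u i = 0 ∧ (∀ k, 0 ≤ u k) ∧
    ∃ x : B × S → ℝ, memPwd E fj w d x ∧ (∀ e ∈ Ei E i, x e = ξ e) ∧
      ∀ k : B, k ≠ i → vsum x (Ei E k) = u k}

/-- The clinching polytope `P^i_{w,d}` of buyer `i`:
all `ξ ∈ ℝ_{≥0}^{E_i}` with `P^i_{w,d}(ξ) = P^i_{w,d}(0)`. -/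
def ClinchP (E : Finset (B × S)) (fj : S → Finset (B × S) → ℝ)
    (w : B × S → ℝ) (d : B → ℝ) (i : B) : Set (B × S → ℝ) :=
  {ξ | (∀ e, 0 ≤ ξ e) ∧ (∀ e ∉ Ei E i, ξ e = 0) ∧
    PiWd E fj w d i ξ = PiWd E fj w d i 0}




set_option linter.unusedSectionVars false

section Agg
variable {ε τ : Type*} [DecidableEq ε] [DecidableEq τ] [Fintype τ]

/-- Polymatroid block-aggregation feasibility theorem. -/
lemma agg (n : ℕ) (G : Finset ε) (hG : G.card = n) (g : Finset ε → ℝ)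
    (hg : IsMonoSubmodular G g) (blk : ε → τ) (y : τ → ℝ) (hy : ∀ t, 0 ≤ y t)
    (hyp : ∀ T : Finset τ, ∑ t ∈ T, y t ≤ g (G.filter fun a => blk a ∈ T)) :
    ∃ x : ε → ℝ, (∀ a, 0 ≤ x a) ∧ (∀ a ∉ G, x a = 0) ∧
      (∀ D ⊆ G, ∑ a ∈ D, x a ≤ g D) ∧
      ∀ t, ∑ a ∈ G.filter (fun a => blk a = t), x a = y t := by
  induction n generalizing G g y with
  | zero =>
    have hGe : G = ∅ := Finset.card_eq_zero.mp hG
    subst hGe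
    refine ⟨fun _ => 0, fun a => le_refl 0, fun a _ => rfl, ?_, ?_⟩
    · intro D hD
      rw [Finset.subset_empty.mp hD]
      simp [hg.1]
    · intro t
      have h1 := hyp {t}
      simp only [Finset.sum_singleton, Finset.filter_empty] at h1
      rw [hg.1] at h1
      simp only [Finset.filter_empty, Finset.sum_empty]
      linarith [hy t]
  | succ n ih =>
    have hGne : G.Nonempty := Finset.card_pos.mp (by omega)
    obtain ⟨e, he⟩ := hGne
    set t₀ := blk e with ht₀
    -- notation
    set D : Finset τ → Finset ε := fun T => G.filter fun a => blk a ∈ T with hD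
    have hDmem : ∀ T a, a ∈ D T ↔ a ∈ G ∧ blk a ∈ T := by
      intro T a; simp [hD]
    have hDsub : ∀ T, D T ⊆ G := fun T => Finset.filter_subset _ _
    have heD : ∀ T, t₀ ∈ T → e ∈ D T := by
      intro T hT; rw [hDmem]; exact ⟨he, hT⟩
    have heD' : ∀ T, t₀ ∉ T → e ∉ D T := by
      intro T hT hmem; rw [hDmem] at hmem; exact hT hmem.2
    -- the sup defining α
    set S : Finset (Finset τ) := Finset.univ.powerset.filter (fun T => t₀ ∈ T) with hSdef
    have hS : S.Nonempty := ⟨{t₀}, by simp [hSdef]⟩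
    set L : ℝ := S.sup' hS (fun T => (∑ t ∈ T, y t) - g ((D T).erase e)) with hL
    set α : ℝ := max L 0 with hα
    have hα0 : 0 ≤ α := le_max_right _ _
    have hαL : ∀ T : Finset τ, t₀ ∈ T →
        (∑ t ∈ T, y t) - g ((D T).erase e) ≤ α := by
      intro T hT
      have hmem : T ∈ S := by simp [hSdef, hT]
      calc (∑ t ∈ T, y t) - g ((D T).erase e)
          ≤ L := Finset.le_sup' (f := fun T => (∑ t ∈ T, y t) - g ((D T).erase e)) hmem
        _ ≤ α := le_max_left _ _
    -- upper bound: α ≤ y t₀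
    have hUB2 : α ≤ y t₀ := by
      refine max_le ?_ (hy t₀)
      refine Finset.sup'_le _ _ ?_
      intro T hT
      have hTt : t₀ ∈ T := by simp [hSdef] at hT; exact hT
      have h1 : ∑ t ∈ T.erase t₀, y t ≤ g (D (T.erase t₀)) := hyp _
      have h2 : D (T.erase t₀) ⊆ (D T).erase e := by
        intro a ha
        rw [hDmem] at ha
        rw [Finset.mem_erase, hDmem]
        refine ⟨?_, ha.1, Finset.mem_of_mem_erase ha.2⟩
        intro hae; subst hae
        exact (Finset.mem_erase.mp ha.2).1 rfl
      have h3 : g (D (T.erase t₀)) ≤ g ((D T).erase e) :=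
        hg.2.1 _ _ h2 ((Finset.erase_subset _ _).trans (hDsub T))
      have h4 : y t₀ + ∑ t ∈ T.erase t₀, y t = ∑ t ∈ T, y t :=
        Finset.add_sum_erase _ _ hTt
      linarith
    -- upper bound: α ≤ g {e}
    have hge : ({e} : Finset ε) ⊆ G := by simpa using he
    have hUB3 : α ≤ g {e} := by
      refine max_le ?_ ?_
      · refine Finset.sup'_le _ _ ?_
        intro T hT
        have hTt : t₀ ∈ T := by simp [hSdef] at hT; exact hT
        have hsub := hg.2.2 ((D T).erase e) {e} ((Finset.erase_subset _ _).trans (hDsub T)) hge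
        have h1 : (D T).erase e ∩ {e} = ∅ := by
          ext a; simp +contextual [Finset.mem_erase]
        have h2 : (D T).erase e ∪ {e} = D T := by
          ext a
          simp only [Finset.mem_union, Finset.mem_erase, Finset.mem_singleton]
          constructor
          · rintro (⟨-, h⟩ | rfl)
            · exact h
            · exact heD T hTt
          · intro h
            by_cases hae : a = e
            · exact Or.inr hae
            · exact Or.inl ⟨hae, h⟩
        rw [h1, h2, hg.1] at hsub
        have := hyp T
        linarith
      · have := hg.2.1 ∅ {e} (Finset.empty_subset _) hge
        rw [hg.1] at this; linarith
    -- upper bound family: for T not containing t₀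
    have hUB1 : ∀ T : Finset τ, t₀ ∉ T →
        α ≤ g (insert e (D T)) - ∑ t ∈ T, y t := by
      intro T₂ hT₂
      have hins : insert e (D T₂) ⊆ G := by
        intro a ha; rcases Finset.mem_insert.mp ha with rfl | h
        · exact he
        · exact hDsub _ h
      refine max_le ?_ ?_
      · refine Finset.sup'_le _ _ ?_
        intro T₁ hT₁m
        have hT₁ : t₀ ∈ T₁ := by simp [hSdef] at hT₁m; exact hT₁m
        -- submodularity of (D T₁).erase e and insert e (D T₂)
        have hsub := hg.2.2 ((D T₁).erase e) (insert e (D T₂))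
          ((Finset.erase_subset _ _).trans (hDsub _)) hins
        have hint : (D T₁).erase e ∩ insert e (D T₂) = D (T₁ ∩ T₂) := by
          ext a
          simp only [Finset.mem_inter, Finset.mem_erase, Finset.mem_insert, hDmem,
            Finset.mem_inter]
          constructor
          · rintro ⟨⟨hne, hG1, hb1⟩, (rfl | ⟨hG2, hb2⟩)⟩
            · exact absurd rfl hne
            · exact ⟨hG1, hb1, hb2⟩
          · rintro ⟨hG1, hb1, hb2⟩
            have hne : a ≠ e := by rintro rfl; exact hT₂ hb2
            exact ⟨⟨hne, hG1, hb1⟩, Or.inr ⟨hG1, hb2⟩⟩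
        have hun : (D T₁).erase e ∪ insert e (D T₂) = D (T₁ ∪ T₂) := by
          ext a
          simp only [Finset.mem_union, Finset.mem_erase, Finset.mem_insert, hDmem,
            Finset.mem_union]
          constructor
          · rintro (⟨hne, hG1, hb1⟩ | (rfl | ⟨hG2, hb2⟩))
            · exact ⟨hG1, Or.inl hb1⟩
            · exact ⟨he, Or.inl hT₁⟩
            · exact ⟨hG2, Or.inr hb2⟩
          · rintro ⟨hGa, hb1 | hb2⟩
            · by_cases hae : a = e
              · exact Or.inr (Or.inl hae)
              · exact Or.inl ⟨hae, hGa, hb1⟩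
            · exact Or.inr (Or.inr ⟨hGa, hb2⟩)
        rw [hint, hun] at hsub
        have h1 : ∑ t ∈ T₁ ∩ T₂, y t ≤ g (D (T₁ ∩ T₂)) := hyp _
        have h2 : ∑ t ∈ T₁ ∪ T₂, y t ≤ g (D (T₁ ∪ T₂)) := hyp _
        have h3 : (∑ t ∈ T₁ ∪ T₂, y t) + ∑ t ∈ T₁ ∩ T₂, y t
            = (∑ t ∈ T₁, y t) + ∑ t ∈ T₂, y t := Finset.sum_union_inter
        linarith
      · have h1 : ∑ t ∈ T₂, y t ≤ g (D T₂) := hyp _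
        have h2 : g (D T₂) ≤ g (insert e (D T₂)) :=
          hg.2.1 _ _ (Finset.subset_insert _ _) hins
        linarith
    -- contracted function
    set g' : Finset ε → ℝ := fun F => min (g F) (g (insert e F) - α) with hg'def
    have hg'le : ∀ F, g' F ≤ g F := fun F => min_le_left _ _
    have hg'le2 : ∀ F, g' F ≤ g (insert e F) - α := fun F => min_le_right _ _
    have hGsub : G.erase e ⊆ G := Finset.erase_subset _ _
    have hinsG : ∀ F : Finset ε, F ⊆ G.erase e → insert e F ⊆ G := by
      intro F hF
      intro a ha; rcases Finset.mem_insert.mp ha with rfl | h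
      · exact he
      · exact hGsub (hF h)
    have hg' : IsMonoSubmodular (G.erase e) g' := by
      refine ⟨?_, ?_, ?_⟩
      · have : g' ∅ = min (g ∅) (g {e} - α) := by simp [hg'def]
        rw [this, hg.1]
        exact min_eq_left (by linarith [hUB3])
      · intro A B hAB hBG
        have hAG : A ⊆ G := (hAB.trans hBG).trans hGsub
        exact min_le_min (hg.2.1 A B hAB (hBG.trans hGsub))
          (by
            have := hg.2.1 (insert e A) (insert e B)
              (Finset.insert_subset_insert _ hAB) (hinsG B hBG)
            linarith)
      · intro A B hA hB
        have heA : e ∉ A := fun h => (Finset.mem_erase.mp (hA h)).1 rfl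
        have heB : e ∉ B := fun h => (Finset.mem_erase.mp (hB h)).1 rfl
        have hAG : A ⊆ G := hA.trans hGsub
        have hBG : B ⊆ G := hB.trans hGsub
        have hiA : insert e A ⊆ G := hinsG A hA
        have hiB : insert e B ⊆ G := hinsG B hB
        have hintAiB : A ∩ insert e B = A ∩ B := by
          ext a
          simp only [Finset.mem_inter, Finset.mem_insert]
          constructor
          · rintro ⟨ha, rfl | hb⟩
            · exact absurd ha heA
            · exact ⟨ha, hb⟩
          · rintro ⟨ha, hb⟩; exact ⟨ha, Or.inr hb⟩
        have hunAiB : A ∪ insert e B = insert e (A ∪ B) := by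
          ext a; simp only [Finset.mem_union, Finset.mem_insert]; tauto
        have hintiAB : insert e A ∩ B = A ∩ B := by
          ext a
          simp only [Finset.mem_inter, Finset.mem_insert]
          constructor
          · rintro ⟨rfl | ha, hb⟩
            · exact absurd hb heB
            · exact ⟨ha, hb⟩
          · rintro ⟨ha, hb⟩; exact ⟨Or.inr ha, hb⟩
        have huniAB : insert e A ∪ B = insert e (A ∪ B) := by
          ext a; simp only [Finset.mem_union, Finset.mem_insert]; tauto
        have hintiAiB : insert e A ∩ insert e B = insert e (A ∩ B) := by
          ext a; simp only [Finset.mem_inter, Finset.mem_insert]; tauto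
        have huniAiB : insert e A ∪ insert e B = insert e (A ∪ B) := by
          ext a; simp only [Finset.mem_union, Finset.mem_insert]; tauto
        -- four bounds
        have c1 : g' (A ∩ B) + g' (A ∪ B) ≤ g A + g B := by
          have := hg.2.2 A B hAG hBG
          have h1 := hg'le (A ∩ B); have h2 := hg'le (A ∪ B); linarith
        have c2 : g' (A ∩ B) + g' (A ∪ B) ≤ g A + (g (insert e B) - α) := by
          have := hg.2.2 A (insert e B) hAG hiB
          rw [hintAiB, hunAiB] at this
          have h1 := hg'le (A ∩ B); have h2 := hg'le2 (A ∪ B); linarith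
        have c3 : g' (A ∩ B) + g' (A ∪ B) ≤ (g (insert e A) - α) + g B := by
          have := hg.2.2 (insert e A) B hiA hBG
          rw [hintiAB, huniAB] at this
          have h1 := hg'le (A ∩ B); have h2 := hg'le2 (A ∪ B); linarith
        have c4 : g' (A ∩ B) + g' (A ∪ B)
            ≤ (g (insert e A) - α) + (g (insert e B) - α) := by
          have := hg.2.2 (insert e A) (insert e B) hiA hiB
          rw [hintiAiB, huniAiB] at this
          have h1 : g' (A ∩ B) ≤ g (insert e (A ∩ B)) - α := hg'le2 _
          have h2 : g' (A ∪ B) ≤ g (insert e (A ∪ B)) - α := hg'le2 _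
          linarith
        rcases le_total (g A) (g (insert e A) - α) with h1 | h1 <;>
          rcases le_total (g B) (g (insert e B) - α) with h2 | h2
        · rw [show g' A = g A from min_eq_left h1, show g' B = g B from min_eq_left h2]
          exact c1
        · rw [show g' A = g A from min_eq_left h1,
            show g' B = g (insert e B) - α from min_eq_right h2]
          exact c2
        · rw [show g' A = g (insert e A) - α from min_eq_right h1,
            show g' B = g B from min_eq_left h2]
          exact c3
        · rw [show g' A = g (insert e A) - α from min_eq_right h1,
            show g' B = g (insert e B) - α from min_eq_right h2]
          exact c4
    -- updated y
    set y' : τ → ℝ := Function.update y t₀ (y t₀ - α) with hy'def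
    have hy' : ∀ t, 0 ≤ y' t := by
      intro t
      by_cases ht : t = t₀
      · subst ht; rw [hy'def, Function.update_self]; linarith [hUB2]
      · rw [hy'def, Function.update_of_ne ht]; exact hy t
    have hDerase : ∀ T, (G.erase e).filter (fun a => blk a ∈ T) = (D T).erase e := by
      intro T; rw [hD]; exact Finset.filter_erase _ _ _
    have hyp' : ∀ T : Finset τ, ∑ t ∈ T, y' t
        ≤ g' ((G.erase e).filter fun a => blk a ∈ T) := by
      intro T
      rw [hDerase]
      by_cases hT : t₀ ∈ T
      · have h1 : y t₀ + ∑ t ∈ T.erase t₀, y t = ∑ t ∈ T, y t :=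
          Finset.add_sum_erase _ _ hT
        have hsum : ∑ t ∈ T, y' t = (∑ t ∈ T, y t) - α := by
          rw [hy'def, Finset.sum_update_of_mem hT, ← Finset.erase_eq]
          linarith
        rw [hsum]
        refine le_min ?_ ?_
        · linarith [hαL T hT]
        · rw [Finset.insert_erase (heD T hT)]
          linarith [hyp T]
      · have hsum : ∑ t ∈ T, y' t = ∑ t ∈ T, y t := by
          refine Finset.sum_congr rfl ?_
          intro t ht
          have : t ≠ t₀ := by rintro rfl; exact hT ht
          rw [hy'def, Function.update_of_ne this]
        rw [hsum, Finset.erase_eq_of_notMem (heD' T hT)]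
        refine le_min (hyp T) ?_
        linarith [hUB1 T hT]
    -- apply induction hypothesis
    have hcard : (G.erase e).card = n := by
      rw [Finset.card_erase_of_mem he, hG]; omega
    obtain ⟨x', hx'0, hx's, hx'P, hx'b⟩ := ih (G.erase e) hcard g' hg' y' hy' hyp'
    refine ⟨Function.update x' e α, ?_, ?_, ?_, ?_⟩
    · intro a
      by_cases hae : a = e
      · subst hae; rw [Function.update_self]; exact hα0
      · rw [Function.update_of_ne hae]; exact hx'0 a
    · intro a ha
      have hae : a ≠ e := by rintro rfl; exact ha he
      rw [Function.update_of_ne hae]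
      exact hx's a (fun h => ha (hGsub h))
    · intro F hF
      by_cases heF : e ∈ F
      · have h1 : Function.update x' e α e + ∑ a ∈ F.erase e, Function.update x' e α a
            = ∑ a ∈ F, Function.update x' e α a := Finset.add_sum_erase _ _ heF
        have h2 : ∑ a ∈ F.erase e, Function.update x' e α a = ∑ a ∈ F.erase e, x' a := by
          refine Finset.sum_congr rfl ?_
          intro a ha
          exact Function.update_of_ne (Finset.mem_erase.mp ha).1 _ _
        have h3 : F.erase e ⊆ G.erase e := Finset.erase_subset_erase _ hF
        have h4 : ∑ a ∈ F.erase e, x' a ≤ g' (F.erase e) := hx'P _ h3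
        have h5 : g' (F.erase e) ≤ g (insert e (F.erase e)) - α := hg'le2 _
        rw [Finset.insert_erase heF] at h5
        rw [← h1, h2, Function.update_self]
        linarith
      · have h2 : ∑ a ∈ F, Function.update x' e α a = ∑ a ∈ F, x' a := by
          refine Finset.sum_congr rfl ?_
          intro a ha
          have : a ≠ e := by rintro rfl; exact heF ha
          exact Function.update_of_ne this _ _
        have h3 : F ⊆ G.erase e := by
          intro a ha
          refine Finset.mem_erase.mpr ⟨?_, hF ha⟩
          rintro rfl; exact heF ha
        rw [h2]
        exact le_trans (hx'P _ h3) (hg'le _)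
    · intro t
      by_cases ht : t = t₀
      · subst ht
        have heF : e ∈ G.filter (fun a => blk a = t₀) := by
          simp [Finset.mem_filter, he, ht₀]
        have h1 : Function.update x' e α e
              + ∑ a ∈ (G.filter (fun a => blk a = t₀)).erase e, Function.update x' e α a
            = ∑ a ∈ G.filter (fun a => blk a = t₀), Function.update x' e α a :=
          Finset.add_sum_erase _ _ heF
        have h2 : ∑ a ∈ (G.filter (fun a => blk a = t₀)).erase e, Function.update x' e α a
            = ∑ a ∈ (G.erase e).filter (fun a => blk a = t₀), x' a := by
          rw [Finset.filter_erase]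
          refine Finset.sum_congr rfl ?_
          intro a ha
          exact Function.update_of_ne (Finset.mem_erase.mp ha).1 _ _
        rw [← h1, h2, Function.update_self, hx'b t₀, hy'def, Function.update_self]
        ring
      · have heF : e ∉ G.filter (fun a => blk a = t) := by
          simp only [Finset.mem_filter]
          rintro ⟨-, h⟩; exact ht (h ▸ rfl)
        have h0 : (G.erase e).filter (fun a => blk a = t) = G.filter (fun a => blk a = t) := by
          rw [Finset.filter_erase, Finset.erase_eq_of_notMem heF]
        have h2 : ∑ a ∈ G.filter (fun a => blk a = t), Function.update x' e α a
            = ∑ a ∈ G.filter (fun a => blk a = t), x' a := by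
          refine Finset.sum_congr rfl ?_
          intro a ha
          have : a ≠ e := by rintro rfl; exact heF ha
          exact Function.update_of_ne this _ _
        rw [h2, ← h0, hx'b t, hy'def, Function.update_of_ne ht]

end Agg

-- ## helpers

lemma Ej_inter_eq_filter (E : Finset (B × S)) (j : S) {F : Finset (B × S)} (hF : F ⊆ E) :
    Ej E j ∩ F = F.filter (fun e => e.2 = j) := by
  ext e
  simp only [Ej, Finset.mem_inter, Finset.mem_filter]
  exact ⟨fun h => ⟨h.2, h.1.2⟩, fun h => ⟨⟨hF h.1, h.2⟩, h.1⟩⟩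

lemma vsum_fiber (E : Finset (B × S)) (x : B × S → ℝ) {F : Finset (B × S)} (hF : F ⊆ E) :
    vsum x F = ∑ j : S, vsum x (Ej E j ∩ F) := by
  unfold vsum
  rw [← Finset.sum_fiberwise_of_maps_to (g := fun e : B × S => e.2)
    (t := (Finset.univ : Finset S)) (fun e _ => Finset.mem_univ _) x]
  refine Finset.sum_congr rfl ?_
  intro j _
  rw [Ej_inter_eq_filter E j hF]

lemma fTot_of_subset_Ej (E : Finset (B × S)) (fj : S → Finset (B × S) → ℝ)
    (hfj : ∀ j : S, IsMonoSubmodular (Ej E j) (fj j)) {j : S} {F : Finset (B × S)}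
    (hF : F ⊆ Ej E j) : fTot E fj F = fj j F := by
  unfold fTot
  rw [Finset.sum_eq_single j]
  · rw [Finset.inter_eq_right.mpr hF]
  · intro j' _ hj'
    have : Ej E j' ∩ F = ∅ := by
      ext e
      simp only [Ej, Finset.mem_inter, Finset.mem_filter, Finset.notMem_empty, iff_false]
      rintro ⟨⟨-, h1⟩, h2⟩
      have := (Finset.mem_filter.mp (hF h2)).2
      exact hj' (by rw [← h1, this])
    rw [this, (hfj j').1]
  · intro h; exact absurd (Finset.mem_univ j) h

lemma memP_sum (E : Finset (B × S)) (fj : S → Finset (B × S) → ℝ)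
    {x : B × S → ℝ} (hx : memP E fj x) {F : Finset (B × S)} (hF : F ⊆ E) :
    vsum x F ≤ fTot E fj F := by
  rw [vsum_fiber E x hF]
  unfold fTot
  refine Finset.sum_le_sum ?_
  intro j _
  exact hx.2.2 j _ Finset.inter_subset_left

lemma fTot_monoSubmodular (E : Finset (B × S)) (fj : S → Finset (B × S) → ℝ)
    (hfj : ∀ j : S, IsMonoSubmodular (Ej E j) (fj j)) :
    IsMonoSubmodular E (fTot E fj) := by
  refine ⟨?_, ?_, ?_⟩
  · unfold fTot
    rw [Finset.sum_eq_zero]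
    intro j _
    rw [Finset.inter_empty, (hfj j).1]
  · intro A C hAC hCE
    refine Finset.sum_le_sum ?_
    intro j _
    exact (hfj j).2.1 _ _ (Finset.inter_subset_inter (le_refl _) hAC) Finset.inter_subset_left
  · intro A C hA hC
    unfold fTot
    rw [← Finset.sum_add_distrib, ← Finset.sum_add_distrib]
    refine Finset.sum_le_sum ?_
    intro j _
    have h := (hfj j).2.2 (Ej E j ∩ A) (Ej E j ∩ C)
      Finset.inter_subset_left Finset.inter_subset_left
    have h1 : Ej E j ∩ A ∩ (Ej E j ∩ C) = Ej E j ∩ (A ∩ C) := by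
      ext e; simp only [Finset.mem_inter]; tauto
    have h2 : Ej E j ∩ A ∪ Ej E j ∩ C = Ej E j ∩ (A ∪ C) := by
      ext e; simp only [Finset.mem_inter, Finset.mem_union]; tauto
    rw [h1, h2] at h
    exact h

lemma fw_eq_inf' (E : Finset (B × S)) (fj : S → Finset (B × S) → ℝ) (w : B × S → ℝ)
    {F : Finset (B × S)} (hF : F ⊆ E) :
    fw E fj w F = (E.powerset.filter (fun F' => F ⊆ F')).inf'
      ⟨E, by simp [Finset.mem_filter, hF]⟩ (fun F' => fTot E fj F' - vsum w F') := by
  refine Eq.trans ?_ (Finset.inf'_eq_csInf_image _ _ _).symm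
  unfold fw
  congr 1
  ext r
  simp only [Set.mem_setOf_eq, Set.mem_image, Finset.mem_coe, Finset.mem_filter,
    Finset.mem_powerset]
  constructor
  · rintro ⟨F', h1, h2, rfl⟩; exact ⟨F', ⟨h2, h1⟩, rfl⟩
  · rintro ⟨F', ⟨h2, h1⟩, rfl⟩; exact ⟨F', h1, h2, rfl⟩

lemma fw_le_of_between (E : Finset (B × S)) (fj : S → Finset (B × S) → ℝ) (w : B × S → ℝ)
    {F F' : Finset (B × S)} (h1 : F ⊆ F') (h2 : F' ⊆ E) :
    fw E fj w F ≤ fTot E fj F' - vsum w F' := by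
  rw [fw_eq_inf' E fj w (h1.trans h2)]
  exact Finset.inf'_le _ (by simp [Finset.mem_filter, Finset.mem_powerset, h1, h2])

lemma le_fw (E : Finset (B × S)) (fj : S → Finset (B × S) → ℝ) (w : B × S → ℝ)
    {F : Finset (B × S)} (hF : F ⊆ E) {c : ℝ}
    (h : ∀ F' : Finset (B × S), F ⊆ F' → F' ⊆ E → c ≤ fTot E fj F' - vsum w F') :
    c ≤ fw E fj w F := by
  rw [fw_eq_inf' E fj w hF]
  refine Finset.le_inf' _ _ ?_
  intro F' hF'
  simp only [Finset.mem_filter, Finset.mem_powerset] at hF'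
  exact h F' hF'.2 hF'.1

lemma fw_monoSubmodular (E : Finset (B × S)) (fj : S → Finset (B × S) → ℝ)
    (hfj : ∀ j : S, IsMonoSubmodular (Ej E j) (fj j))
    (w : B × S → ℝ) (hw : memP E fj w) :
    IsMonoSubmodular E (fw E fj w) := by
  have hT := fTot_monoSubmodular E fj hfj
  have hnn : ∀ F' : Finset (B × S), F' ⊆ E → 0 ≤ fTot E fj F' - vsum w F' := by
    intro F' hF'
    have := memP_sum E fj hw hF'
    linarith
  refine ⟨?_, ?_, ?_⟩
  · refine le_antisymm ?_ ?_
    · have := fw_le_of_between E fj w (Finset.empty_subset ∅) (Finset.empty_subset E)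
      rw [hT.1] at this
      simpa [vsum] using this
    · exact le_fw E fj w (Finset.empty_subset E) (fun F' _ h2 => hnn F' h2)
  · intro A C hAC hCE
    refine le_fw E fj w hCE ?_
    intro F' h1 h2
    exact fw_le_of_between E fj w (hAC.trans h1) h2
  · intro A C hA hC
    obtain ⟨GA, hGAm, hGA⟩ := Finset.exists_mem_eq_inf'
      (⟨E, by simp [Finset.mem_filter, hA]⟩ : (E.powerset.filter (fun F' => A ⊆ F')).Nonempty)
      (fun F' => fTot E fj F' - vsum w F')
    obtain ⟨GC, hGCm, hGC⟩ := Finset.exists_mem_eq_inf'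
      (⟨E, by simp [Finset.mem_filter, hC]⟩ : (E.powerset.filter (fun F' => C ⊆ F')).Nonempty)
      (fun F' => fTot E fj F' - vsum w F')
    simp only [Finset.mem_filter, Finset.mem_powerset] at hGAm hGCm
    have hfwA : fw E fj w A = fTot E fj GA - vsum w GA := by
      rw [fw_eq_inf' E fj w hA]; exact hGA
    have hfwC : fw E fj w C = fTot E fj GC - vsum w GC := by
      rw [fw_eq_inf' E fj w hC]; exact hGC
    have h1 : fw E fj w (A ∩ C) ≤ fTot E fj (GA ∩ GC) - vsum w (GA ∩ GC) :=
      fw_le_of_between E fj w (Finset.inter_subset_inter hGAm.2 hGCm.2)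
        (Finset.inter_subset_left.trans hGAm.1)
    have h2 : fw E fj w (A ∪ C) ≤ fTot E fj (GA ∪ GC) - vsum w (GA ∪ GC) :=
      fw_le_of_between E fj w (Finset.union_subset_union hGAm.2 hGCm.2)
        (Finset.union_subset hGAm.1 hGCm.1)
    have h3 := hT.2.2 GA GC hGAm.1 hGCm.1
    have h4 : vsum w (GA ∪ GC) + vsum w (GA ∩ GC) = vsum w GA + vsum w GC :=
      Finset.sum_union_inter
    rw [hfwA, hfwC]
    linarith

lemma vsum_le_fw (E : Finset (B × S)) (fj : S → Finset (B × S) → ℝ) (w : B × S → ℝ)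
    {x : B × S → ℝ} (hx0 : ∀ e, 0 ≤ x e) (hwx : memP E fj (w + x))
    {F : Finset (B × S)} (hF : F ⊆ E) :
    vsum x F ≤ fw E fj w F := by
  refine le_fw E fj w hF ?_
  intro F' h1 h2
  have ha : vsum x F ≤ vsum x F' :=
    Finset.sum_le_sum_of_subset_of_nonneg h1 (fun e _ _ => hx0 e)
  have hb : vsum (w + x) F' ≤ fTot E fj F' := memP_sum E fj hwx h2
  have hc : vsum (w + x) F' = vsum w F' + vsum x F' := by
    unfold vsum
    rw [← Finset.sum_add_distrib]
    rfl
  linarith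


lemma vsum_EX (E : Finset (B × S)) (x : B × S → ℝ) (Z : Finset B) :
    vsum x (EX E Z) = ∑ k ∈ Z, vsum x (Ei E k) := by
  have hbi : EX E Z = Z.biUnion (fun k => Ei E k) := by
    ext e
    simp only [EX, Ei, Finset.mem_filter, Finset.mem_biUnion]
    constructor
    · rintro ⟨h1, h2⟩; exact ⟨e.1, h2, h1, rfl⟩
    · rintro ⟨k, hk, h1, rfl⟩; exact ⟨h1, hk⟩
  have hdisj : (↑Z : Set B).PairwiseDisjoint (fun k => Ei E k) := by
    intro k1 _ k2 _ hne
    simp only [Function.onFun, Finset.disjoint_left, Ei, Finset.mem_filter]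
    rintro e ⟨-, h1⟩ ⟨-, h2⟩
    exact hne (by rw [← h1, ← h2])
  rw [hbi, vsum, Finset.sum_biUnion hdisj]
  rfl


set_option maxHeartbeats 1000000 in
/-- membership in `P^i_{w,d}(ξ)` is characterized by the inequalities
`u(Y) ≤ min_{Z ⊆ Y, F ⊆ E_i} (f_w(E_Z ∪ F) + d(Y \ Z) - ξ(F))`. -/
theorem mem_PiWd_iff
    (E : Finset (B × S)) (fj : S → Finset (B × S) → ℝ)
    (hfj : ∀ j : S, IsMonoSubmodular (Ej E j) (fj j))
    (w : B × S → ℝ) (hw : memP E fj w)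
    (d : B → ℝ) (hd : ∀ i : B, 0 ≤ d i)
    (i : B) (ξ : B × S → ℝ) (hξ0 : ∀ e, 0 ≤ ξ e) (hξs : ∀ e ∉ Ei E i, ξ e = 0)
    (hξd : vsum ξ (Ei E i) ≤ d i)
    (u : B → ℝ) (hu0 : ∀ k, 0 ≤ u k) (hui : u i = 0) :
    u ∈ PiWd E fj w d i ξ ↔
      ∀ Y ⊆ Finset.univ.erase i,
        ∑ k ∈ Y, u k ≤
          (Y.powerset ×ˢ (Ei E i).powerset).inf'
            ⟨(∅, ∅), by simp⟩
            (fun p => fw E fj w (EX E p.1 ∪ p.2) + ∑ k ∈ Y \ p.1, d k - vsum ξ p.2) := by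
  have hEiE : Ei E i ⊆ E := Finset.filter_subset _ _
  have hfwMS := fw_monoSubmodular E fj hfj w hw
  constructor
  · rintro ⟨-, -, x, ⟨hx0, hxs, hwx, hxd⟩, hxξ, hxu⟩
    intro Y hY
    refine Finset.le_inf' _ _ ?_
    rintro ⟨Z, F⟩ hp
    simp only [Finset.mem_product, Finset.mem_powerset] at hp
    obtain ⟨hZ, hF⟩ := hp
    have hYi : ∀ k ∈ Y, k ≠ i := fun k hk => (Finset.mem_erase.mp (hY hk)).1
    have hsum1 : ∑ k ∈ Y \ Z, u k + ∑ k ∈ Z, u k = ∑ k ∈ Y, u k := Finset.sum_sdiff hZ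
    have h2 : ∑ k ∈ Y \ Z, u k ≤ ∑ k ∈ Y \ Z, d k := by
      refine Finset.sum_le_sum ?_
      intro k hk
      have hk' : k ≠ i := hYi k (Finset.mem_sdiff.mp hk).1
      rw [← hxu k hk']
      exact hxd k
    have h3 : ∑ k ∈ Z, u k = vsum x (EX E Z) := by
      rw [vsum_EX]
      refine Finset.sum_congr rfl ?_
      intro k hk
      exact (hxu k (hYi k (hZ hk))).symm
    have h4 : Disjoint (EX E Z) F := by
      simp only [Finset.disjoint_left, EX, Finset.mem_filter]
      rintro e ⟨-, h1⟩ h2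
      have := (Finset.mem_filter.mp (hF h2)).2
      exact hYi e.1 (hZ h1) (by rw [this])
    have h5 : vsum x (EX E Z ∪ F) = vsum x (EX E Z) + vsum x F := Finset.sum_union h4
    have h6 : vsum x F = vsum ξ F := by
      refine Finset.sum_congr rfl ?_
      intro e he
      exact hxξ e (hF he)
    have h7 : vsum x (EX E Z ∪ F) ≤ fw E fj w (EX E Z ∪ F) :=
      vsum_le_fw E fj w hx0 hwx
        (Finset.union_subset (Finset.filter_subset _ _) (hF.trans hEiE))
    simp only []
    linarith
  · intro hmain
    refine ⟨hui, hu0, ?_⟩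
    have hudk : ∀ k, k ≠ i → u k ≤ d k := by
      intro k hk
      have hmem : ((∅ : Finset B), (∅ : Finset (B × S)))
          ∈ ({k} : Finset B).powerset ×ˢ (Ei E i).powerset := by simp
      have h := hmain {k} (by
        rw [Finset.singleton_subset_iff, Finset.mem_erase]
        exact ⟨hk, Finset.mem_univ k⟩)
      have h3 := Finset.inf'_le
        (fun p => fw E fj w (EX E p.1 ∪ p.2) + ∑ k' ∈ ({k} : Finset B) \ p.1, d k' - vsum ξ p.2)
        hmem
      have h2 := le_trans h h3
      have hEX : EX E (∅ : Finset B) = ∅ := by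
        ext e; simp [EX]
      simp only [hEX, Finset.union_empty, Finset.sdiff_empty, Finset.sum_singleton,
        Finset.sum_empty] at h2
      rw [hfwMS.1] at h2
      have hv : vsum ξ (∅ : Finset (B × S)) = 0 := by simp [vsum]
      rw [hv] at h2
      simpa using h2
    set blk : B × S → B ⊕ (B × S) := fun e => if e.1 = i then Sum.inr e else Sum.inl e.1
      with hblk
    set y : B ⊕ (B × S) → ℝ := Sum.elim u (fun e => if e ∈ Ei E i then ξ e else 0) with hy
    have hy0 : ∀ t, 0 ≤ y t := by
      rintro (k | e)
      · exact hu0 k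
      · simp only [hy, Sum.elim_inr]
        split
        · exact hξ0 e
        · exact le_refl 0
    have hyp : ∀ T : Finset (B ⊕ (B × S)),
        ∑ t ∈ T, y t ≤ fw E fj w (E.filter fun a => blk a ∈ T) := by
      intro T
      set Y : Finset B := T.toLeft.erase i with hYdef
      set F : Finset (B × S) := T.toRight.filter (fun e => e ∈ Ei E i) with hFdef
      have hYs : Y ⊆ Finset.univ.erase i := by
        intro k hk
        exact Finset.mem_erase.mpr ⟨(Finset.mem_erase.mp hk).1, Finset.mem_univ k⟩
      have hFs : F ⊆ Ei E i := fun e he => (Finset.mem_filter.mp he).2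
      have hsumT : ∑ t ∈ T, y t = ∑ k ∈ Y, u k + vsum ξ F := by
        conv_lhs => rw [← Finset.toLeft_disjSum_toRight (u := T)]
        rw [Finset.sum_disjSum]
        congr 1
        · simp only [hy, Sum.elim_inl]
          by_cases hi : i ∈ T.toLeft
          · rw [← Finset.add_sum_erase _ u hi, hui, zero_add]
          · rw [hYdef, Finset.erase_eq_of_notMem hi]
        · simp only [hy, Sum.elim_inr]
          rw [hFdef, vsum, Finset.sum_filter]
      have hEq : EX E Y ∪ F = E.filter (fun a => blk a ∈ T) := by
        ext e
        constructor
        · intro he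
          rcases Finset.mem_union.mp he with hl | hr
          · obtain ⟨heE, heY⟩ := Finset.mem_filter.mp hl
            obtain ⟨hne, hTL⟩ := Finset.mem_erase.mp heY
            refine Finset.mem_filter.mpr ⟨heE, ?_⟩
            have : blk e = Sum.inl e.1 := by
              simp only [hblk, if_neg hne]
            rw [this]
            exact Finset.mem_toLeft.mp hTL
          · obtain ⟨hTR, hEim⟩ := Finset.mem_filter.mp hr
            obtain ⟨heE, hei⟩ := Finset.mem_filter.mp hEim
            refine Finset.mem_filter.mpr ⟨heE, ?_⟩
            have : blk e = Sum.inr e := by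
              simp only [hblk, if_pos hei]
            rw [this]
            exact Finset.mem_toRight.mp hTR
        · intro he
          obtain ⟨heE, hbT⟩ := Finset.mem_filter.mp he
          by_cases hei : e.1 = i
          · refine Finset.mem_union_right _ (Finset.mem_filter.mpr
              ⟨?_, Finset.mem_filter.mpr ⟨heE, hei⟩⟩)
            refine Finset.mem_toRight.mpr ?_
            have : blk e = Sum.inr e := by simp only [hblk, if_pos hei]
            rwa [this] at hbT
          · refine Finset.mem_union_left _ (Finset.mem_filter.mpr ⟨heE, ?_⟩)
            refine Finset.mem_erase.mpr ⟨hei, Finset.mem_toLeft.mpr ?_⟩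
            have : blk e = Sum.inl e.1 := by simp only [hblk, if_neg hei]
            rwa [this] at hbT
      have hmem : (Y, F) ∈ Y.powerset ×ˢ (Ei E i).powerset := by
        simp only [Finset.mem_product, Finset.mem_powerset]
        exact ⟨Finset.Subset.refl Y, hFs⟩
      have h3 := Finset.inf'_le
        (fun p => fw E fj w (EX E p.1 ∪ p.2) + ∑ k' ∈ Y \ p.1, d k' - vsum ξ p.2)
        hmem
      have h := le_trans (hmain Y hYs) h3
      rw [Finset.sdiff_self, Finset.sum_empty] at h
      rw [hsumT, ← hEq]
      linarith
    obtain ⟨x, hx0, hxs, hxP, hxb⟩ :=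
      agg (ε := B × S) (τ := B ⊕ (B × S)) E.card E rfl (fw E fj w) hfwMS blk y hy0 hyp
    have hxEi : ∀ e ∈ Ei E i, x e = ξ e := by
      intro e0 he0
      obtain ⟨he0E, he0i⟩ := Finset.mem_filter.mp he0
      have h := hxb (Sum.inr e0)
      have hfil : E.filter (fun a => blk a = Sum.inr e0) = {e0} := by
        ext e
        simp only [Finset.mem_filter, Finset.mem_singleton, hblk]
        constructor
        · rintro ⟨heE, hbe⟩
          by_cases hei : e.1 = i
          · rw [if_pos hei] at hbe
            exact Sum.inr.inj hbe
          · rw [if_neg hei] at hbe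
            exact absurd hbe (by simp)
        · rintro rfl
          exact ⟨he0E, by rw [if_pos he0i]⟩
      rw [hfil, Finset.sum_singleton] at h
      rw [h]
      simp only [hy, Sum.elim_inr, if_pos he0]
    have hxk : ∀ k, k ≠ i → vsum x (Ei E k) = u k := by
      intro k hk
      have h := hxb (Sum.inl k)
      have hfil : E.filter (fun a => blk a = Sum.inl k) = Ei E k := by
        ext e
        simp only [Finset.mem_filter, Ei, hblk]
        constructor
        · rintro ⟨heE, hbe⟩
          by_cases hei : e.1 = i
          · rw [if_pos hei] at hbe
            exact absurd hbe (by simp)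
          · rw [if_neg hei] at hbe
            exact ⟨heE, Sum.inl.inj hbe⟩
        · rintro ⟨heE, hek⟩
          refine ⟨heE, ?_⟩
          rw [if_neg (by rw [hek]; exact hk)]
          rw [hek]
      rw [hfil] at h
      rw [vsum, h]
      simp [hy]
    have hxEii : vsum x (Ei E i) = vsum ξ (Ei E i) := by
      refine Finset.sum_congr rfl ?_
      intro e he
      exact hxEi e he
    have hmemP : memP E fj (w + x) := by
      refine ⟨fun e => add_nonneg (hw.1 e) (hx0 e), ?_, ?_⟩
      · intro e he
        have h1 := hw.2.1 e he
        have h2 := hxs e he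
        simp [h1, h2]
      · intro j F hF
        have hFE : F ⊆ E := hF.trans (Finset.filter_subset _ _)
        have hc : vsum (w + x) F = vsum w F + vsum x F := by
          unfold vsum
          rw [← Finset.sum_add_distrib]
          rfl
        have h1 : vsum x F ≤ fw E fj w F := hxP F hFE
        have h2 : fw E fj w F ≤ fTot E fj F - vsum w F :=
          fw_le_of_between E fj w (Finset.Subset.refl F) hFE
        have h3 : fTot E fj F = fj j F := fTot_of_subset_Ej E fj hfj hF
        linarith
    refine ⟨x, ⟨hx0, hxs, hmemP, ?_⟩, hxEi, hxk⟩
    intro k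
    by_cases hk : k = i
    · subst hk
      rw [hxEii]
      exact hξd
    · rw [hxk k hk]
      exact hudk k hk

end TwoSidedMarket
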